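/- For all n ≥ 0 and positive integers r, Σ_{k=0}^{n} C(n,k) w_k^{(r)}(y) r^{n-k} = (-1)^n w_n^{(r)}(-y-1) as an identity of polynomials in y. -/

import Mathlib

open Finset

/-- Stirling numbers of the second kind. -/
def stirling2 : ℕ → ℕ → ℕ
  | 0, 0 => 1
  | 0, _+1 => 0
  | _+1, 0 => 0
  | n+1, k+1 => stirling2 n k + (k+1) * stirling2 n (k+1)

/-- Unsigned Stirling numbers of the first kind. -/
def stirling1 : ℕ → ℕ → ℕ
  | 0, 0 => 1
  | 0, _+1 => 0
  | _+1, 0 => 0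
  | n+1, k+1 => stirling1 n k + n * stirling1 n (k+1)

/-- `rstirling2 r n k` is the r-Stirling number of the second kind S_r(n+r, k+r). -/
def rstirling2 (r : ℕ) : ℕ → ℕ → ℕ
  | 0, 0 => 1
  | 0, _+1 => 0
  | n+1, 0 => r * rstirling2 r n 0
  | n+1, k+1 => rstirling2 r n k + (k+1+r) * rstirling2 r n (k+1)

/-- `rstirling1 r n k` is the unsigned r-Stirling number of the first kind c_r(n+r, k+r). -/
def rstirling1 (r : ℕ) : ℕ → ℕ → ℕ
  | 0, 0 => 1
  | 0, _+1 => 0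
  | n+1, 0 => (n+r) * rstirling1 r n 0
  | n+1, k+1 => rstirling1 r n k + (n+r) * rstirling1 r n (k+1)

/-- Rising factorial (Pochhammer symbol) (r)_k = r(r+1)⋯(r+k-1). -/
def risingFactorial (r k : ℕ) : ℕ := ∏ i ∈ Finset.range k, (r + i)

/-- Higher order geometric polynomial w_n^{(r)}(y) = Σ_{k=0}^n S(n,k) (r)_k y^k.
For r = 1 this is the geometric (Fubini) polynomial w_n(y). -/
def geomPoly (r n : ℕ) {R : Type*} [CommRing R] (y : R) : R :=
  ∑ k ∈ Finset.range (n+1), ((stirling2 n k * risingFactorial r k : ℕ) : R) * y ^ k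

namespace Aux
open Finset Polynomial

lemma stirling2_eq_zero : ∀ {n k : ℕ}, n < k → stirling2 n k = 0 := by
  intro n
  induction n with
  | zero => intro k h; cases k with
    | zero => omega
    | succ k => rfl
  | succ n ih =>
    intro k h
    cases k with
    | zero => omega
    | succ k =>
      show stirling2 n k + (k+1) * stirling2 n (k+1) = 0
      rw [ih (by omega), ih (by omega)]
      simp

lemma risingFactorial_succ (r k : ℕ) :
    risingFactorial r (k+1) = risingFactorial r k * (r + k) := by
  rw [risingFactorial, risingFactorial, Finset.prod_range_succ]

noncomputable def Wp (r n : ℕ) : Polynomial ℤ :=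
  ∑ k ∈ range (n+1), C ((stirling2 n k * risingFactorial r k : ℕ) : ℤ) * X ^ k

lemma Wp_coeff (r n m : ℕ) :
    (Wp r n).coeff m = ((stirling2 n m * risingFactorial r m : ℕ) : ℤ) := by
  rw [Wp, finset_sum_coeff]
  simp only [coeff_C_mul, coeff_X_pow, mul_ite, mul_one, mul_zero]
  by_cases h : m < n + 1
  · rw [Finset.sum_eq_single m]
    · simp
    · intro b _ hb; simp [Ne.symm hb]
    · intro h'; exact absurd (Finset.mem_range.mpr h) h'
  · rw [Finset.sum_eq_zero, stirling2_eq_zero (by omega)]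
    · simp
    · intro b hb
      have hbm : m ≠ b := by simp at hb; omega
      simp [hbm]

lemma coeff_X_mul_derivative (p : Polynomial ℤ) (m : ℕ) :
    (X * derivative p).coeff m = m * p.coeff m := by
  cases m with
  | zero => simp
  | succ m => rw [coeff_X_mul, coeff_derivative]; push_cast; ring

lemma Wp_rec (r n : ℕ) :
    Wp r (n+1) = X * ((X + 1) * derivative (Wp r n) + C (r : ℤ) * Wp r n) := by
  ext m
  cases m with
  | zero =>
    rw [mul_coeff_zero, coeff_X_zero, zero_mul, Wp_coeff]
    show ((stirling2 (n+1) 0 * risingFactorial r 0 : ℕ) : ℤ) = 0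
    rfl
  | succ m =>
    rw [coeff_X_mul, Wp_coeff, add_mul, one_mul, coeff_add, coeff_add,
      coeff_X_mul_derivative, coeff_derivative, coeff_C_mul, Wp_coeff, Wp_coeff,
      risingFactorial_succ]
    have hs : stirling2 (n+1) (m+1) = stirling2 n m + (m+1) * stirling2 n (m+1) := rfl
    rw [hs]
    push_cast
    ring

lemma Wp_eval (r n : ℕ) (z : ℤ) : (Wp r n).eval z = geomPoly r n z := by
  rw [Wp, geomPoly, eval_finset_sum]
  simp

noncomputable def A (r n : ℕ) : Polynomial ℤ :=
  ∑ k ∈ range (n+1), C (n.choose k : ℤ) * Wp r k * C (r : ℤ) ^ (n - k)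

noncomputable def T (r n : ℕ) : Polynomial ℤ := (Wp r n).comp (-(X + 1))

lemma A_rec (r n : ℕ) :
    A r (n+1) = X * (X + 1) * derivative (A r n) + C (r : ℤ) * ((1 + X) * A r n) := by
  have peel : A r (n+1)
      = (∑ i ∈ range (n+1), C (((n+1).choose (i+1) : ℕ) : ℤ) * Wp r (i+1) * C (r : ℤ) ^ (n - i))
        + C (((n+1).choose 0 : ℕ) : ℤ) * Wp r 0 * C (r : ℤ) ^ (n+1) := by
    rw [A, Finset.sum_range_succ']
    simp only [Nat.succ_sub_succ_eq_sub, Nat.sub_zero]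
  have S1S2 : (∑ i ∈ range (n+1), C (((n+1).choose (i+1) : ℕ) : ℤ) * Wp r (i+1) * C (r : ℤ) ^ (n - i))
      = (∑ i ∈ range (n+1), C ((n.choose i : ℕ) : ℤ) * Wp r (i+1) * C (r : ℤ) ^ (n - i))
        + (∑ i ∈ range (n+1), C ((n.choose (i+1) : ℕ) : ℤ) * Wp r (i+1) * C (r : ℤ) ^ (n - i)) := by
    rw [← Finset.sum_add_distrib]
    refine Finset.sum_congr rfl fun i _ => ?_
    rw [show (C (((n+1).choose (i+1) : ℕ) : ℤ)) = C ((n.choose i : ℕ) : ℤ) + C ((n.choose (i+1) : ℕ) : ℤ) by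
      rw [← C_add, ← Nat.cast_add, ← Nat.choose_succ_succ]]
    ring
  have hS2 : (∑ i ∈ range (n+1), C ((n.choose (i+1) : ℕ) : ℤ) * Wp r (i+1) * C (r : ℤ) ^ (n - i))
        + C (((n+1).choose 0 : ℕ) : ℤ) * Wp r 0 * C (r : ℤ) ^ (n+1)
      = C (r : ℤ) * A r n := by
    have e1 : (∑ i ∈ range (n+1), C ((n.choose (i+1) : ℕ) : ℤ) * Wp r (i+1) * C (r : ℤ) ^ (n - i))
        = ∑ i ∈ range n, C ((n.choose (i+1) : ℕ) : ℤ) * Wp r (i+1) * C (r : ℤ) ^ (n - i) := by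
      rw [Finset.sum_range_succ, Nat.choose_succ_self]
      simp
    have e2 : C (r : ℤ) * A r n
        = (∑ i ∈ range n, C ((n.choose (i+1) : ℕ) : ℤ) * Wp r (i+1) * C (r : ℤ) ^ (n - (i+1) + 1))
          + C ((n.choose 0 : ℕ) : ℤ) * Wp r 0 * C (r : ℤ) ^ (n - 0 + 1) := by
      rw [A, Finset.mul_sum, Finset.sum_range_succ']
      refine congrArg₂ (· + ·) ?_ ?_
      · exact Finset.sum_congr rfl fun i _ => by rw [pow_succ]; ring
      · rw [pow_succ]; ring
    rw [e1, e2]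
    refine congrArg₂ (· + ·) ?_ ?_
    · refine Finset.sum_congr rfl fun i hi => ?_
      have hlt : i < n := Finset.mem_range.mp hi
      have : n - (i+1) + 1 = n - i := by omega
      rw [this]
    · have : n - 0 + 1 = n + 1 := by omega
      rw [this]
      norm_num
  have hS1 : (∑ i ∈ range (n+1), C ((n.choose i : ℕ) : ℤ) * Wp r (i+1) * C (r : ℤ) ^ (n - i))
      = X * (X + 1) * derivative (A r n) + C (r : ℤ) * X * A r n := by
    have hd : derivative (A r n)
        = ∑ i ∈ range (n+1), C ((n.choose i : ℕ) : ℤ) * derivative (Wp r i) * C (r : ℤ) ^ (n - i) := by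
      rw [A, derivative_sum]
      refine Finset.sum_congr rfl fun i _ => ?_
      rw [derivative_mul, derivative_mul, derivative_C, zero_mul, zero_add,
        ← C_pow, derivative_C, mul_zero, add_zero, C_pow]
    rw [hd, A, Finset.mul_sum, Finset.mul_sum, ← Finset.sum_add_distrib]
    refine Finset.sum_congr rfl fun i _ => ?_
    rw [Wp_rec]
    ring
  rw [peel]
  rw [S1S2]
  rw [add_assoc]
  rw [hS2]
  rw [hS1]
  ring

lemma T_rec (r n : ℕ) :
    T r (n+1) = -(X * (X + 1) * derivative (T r n) + C (r : ℤ) * ((1 + X) * T r n)) := by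
  have hdc : (derivative (Wp r n)).comp (-(X + 1)) = -derivative (T r n) := by
    rw [T, Polynomial.derivative_comp]
    have hq : derivative (-(X + 1) : Polynomial ℤ) = -1 := by simp
    rw [hq]
    ring
  rw [T, Wp_rec]
  simp only [mul_comp, add_comp, X_comp, one_comp, C_comp]
  rw [hdc, show (Wp r n).comp (-(X+1)) = T r n from rfl]
  ring

lemma key (r n : ℕ) : A r n = C ((-1 : ℤ)^n) * T r n := by
  induction n with
  | zero =>
    have h0 : Wp r 0 = 1 := by
      rw [Wp]
      simp [show stirling2 0 0 = 1 from rfl, show risingFactorial r 0 = 1 from rfl]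
    rw [A, T]
    simp [h0]
  | succ n ih =>
    rw [A_rec, T_rec, ih]
    rw [derivative_C_mul]
    rw [pow_succ, C_mul, show (C (-1 : ℤ)) = -1 by simp]
    ring

end Aux

theorem stmt_12 (n r : ℕ) (hr : 1 ≤ r) (y : ℤ) :
    ∑ k ∈ Finset.range (n+1), (n.choose k : ℤ) * geomPoly r k y * (r : ℤ)^(n-k) =
      (-1)^n * geomPoly r n (-y - 1) := by
  have h := congrArg (Polynomial.eval y) (Aux.key r n)
  rw [Aux.A, Aux.T] at h
  simp only [Polynomial.eval_finset_sum, Polynomial.eval_mul, Polynomial.eval_pow,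
    Polynomial.eval_C, Polynomial.eval_comp, Polynomial.eval_neg, Polynomial.eval_add,
    Polynomial.eval_X, Polynomial.eval_one, Aux.Wp_eval] at h
  rw [show -(y + 1) = -y - 1 by ring] at h
  exact h
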